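/- Let μ be a Borel probability measure on [0,1], Q^μ its quantile function, and suppose there exist 0 ≤ z¹ < z² < 1/2 with Q^μ(zⁱ) = Q^μ(zⁱ + 1/2) for i = 1,2. Then μ has an atom of mass strictly greater than 1/2. -/

import Mathlib

open MeasureTheory Set Filter

/-- The quantile function of a Borel probability measure `μ` on `[0,1]`:
`Q^μ(p) = inf {t ∈ [0,1] : μ([0,t]) ≥ p}`. -/
noncomputable def quantile (μ : Measure ℝ) (p : ℝ) : ℝ :=
  sInf {t ∈ Icc (0:ℝ) 1 | ENNReal.ofReal p ≤ μ (Icc 0 t)}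

lemma quantile_mem (μ : Measure ℝ) [IsProbabilityMeasure μ]
    (hsupp : μ (Icc (0:ℝ) 1) = 1) (p : ℝ) (hp : p ≤ 1) :
    quantile μ p ∈ {t ∈ Icc (0:ℝ) 1 | ENNReal.ofReal p ≤ μ (Icc 0 t)} := by
  set S := {t ∈ Icc (0:ℝ) 1 | ENNReal.ofReal p ≤ μ (Icc 0 t)} with hS
  have h1S : (1:ℝ) ∈ S := by
    refine ⟨⟨zero_le_one, le_rfl⟩, ?_⟩
    rw [hsupp]
    exact ENNReal.ofReal_le_one.mpr hp
  have hne : S.Nonempty := ⟨1, h1S⟩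
  have hbdd : BddBelow S := ⟨0, fun t ht => ht.1.1⟩
  obtain ⟨u, hu_anti, hu_tend, hu_mem⟩ := exists_seq_tendsto_sInf hne hbdd
  have ha0 : 0 ≤ sInf S := le_csInf hne fun t ht => ht.1.1
  have ha1 : sInf S ≤ 1 := csInf_le hbdd h1S
  have hIcc : Icc (0:ℝ) (sInf S) = ⋂ n, Icc 0 (u n) := by
    ext x
    simp only [mem_Icc, mem_iInter]
    constructor
    · rintro ⟨hx0, hx⟩ n
      exact ⟨hx0, hx.trans (csInf_le hbdd (hu_mem n))⟩
    · intro h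
      refine ⟨(h 0).1, ?_⟩
      exact ge_of_tendsto hu_tend (Eventually.of_forall fun n => (h n).2)
  have htend : Tendsto (fun n => μ (Icc 0 (u n))) atTop (nhds (μ (Icc 0 (sInf S)))) := by
    rw [hIcc]
    exact MeasureTheory.tendsto_measure_iInter_atTop
      (fun n => measurableSet_Icc.nullMeasurableSet)
      (fun m n h => Icc_subset_Icc le_rfl (hu_anti h)) ⟨0, measure_ne_top μ _⟩
  refine ⟨⟨ha0, ha1⟩, ?_⟩
  exact ge_of_tendsto htend (Eventually.of_forall fun n => (hu_mem n).2)

lemma measure_Ico_quantile_le (μ : Measure ℝ) [IsProbabilityMeasure μ]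
    (hsupp : μ (Icc (0:ℝ) 1) = 1) (p : ℝ) (hp : p ≤ 1) :
    μ (Ico 0 (quantile μ p)) ≤ ENNReal.ofReal p := by
  set a := quantile μ p with ha
  have hmem := quantile_mem μ hsupp p hp
  have ha0 : 0 ≤ a := hmem.1.1
  have ha1 : a ≤ 1 := hmem.1.2
  rcases eq_or_lt_of_le ha0 with h | h
  · rw [← h]; simp
  -- a > 0
  set v : ℕ → ℝ := fun n => a - a / (n + 1) with hv
  have hvlt : ∀ n, v n < a := fun n => by
    have : 0 < a / (n + 1) := div_pos h (by positivity)
    simp [hv]; linarith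
  have hv0 : ∀ n, 0 ≤ v n := fun n => by
    have : a / (n + 1) ≤ a := by
      rw [div_le_iff₀ (by positivity)]
      nlinarith
    simp [hv]; linarith
  have hcover : Ico 0 a ⊆ ⋃ n, Icc 0 (v n) := by
    rintro x ⟨hx0, hxa⟩
    obtain ⟨n, hn⟩ := exists_nat_gt (a / (a - x))
    refine mem_iUnion.mpr ⟨n, hx0, ?_⟩
    have hax : 0 < a - x := by linarith
    have : a / (n + 1) ≤ a - x := by
      rw [div_le_iff₀ (by positivity)]
      have : a / (a - x) < n + 1 := by linarith
      rw [div_lt_iff₀ hax] at this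
      linarith
    simp only [hv]
    linarith
  have hdir : Directed (· ⊆ ·) (fun n => Icc (0:ℝ) (v n)) := by
    intro m n
    rcases le_total (v m) (v n) with h' | h'
    · exact ⟨n, Icc_subset_Icc le_rfl h', subset_rfl⟩
    · exact ⟨m, subset_rfl, Icc_subset_Icc le_rfl h'⟩
  calc μ (Ico 0 a) ≤ μ (⋃ n, Icc 0 (v n)) := measure_mono hcover
    _ = ⨆ n, μ (Icc 0 (v n)) := hdir.measure_iUnion
    _ ≤ ENNReal.ofReal p := by
        refine iSup_le fun n => ?_
        by_contra hcon
        push_neg at hcon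
        have : v n ∈ {t ∈ Icc (0:ℝ) 1 | ENNReal.ofReal p ≤ μ (Icc 0 t)} :=
          ⟨⟨hv0 n, (hvlt n).le.trans ha1⟩, hcon.le⟩
        have : a ≤ v n := csInf_le ⟨0, fun t ht => ht.1.1⟩ this
        exact absurd this (not_le.mpr (hvlt n))

/-- If there are `0 ≤ z¹ < z² < 1/2` with `Q^μ(zⁱ) = Q^μ(zⁱ + 1/2)` for `i = 1,2`,
then `μ` has an atom of mass strictly greater than `1/2`. -/
theorem atom_of_quantile_eq (μ : Measure ℝ) [IsProbabilityMeasure μ]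
    (hsupp : μ (Icc (0:ℝ) 1) = 1)
    (z₁ z₂ : ℝ) (h0 : 0 ≤ z₁) (h12 : z₁ < z₂) (h2 : z₂ < 1/2)
    (hq1 : quantile μ z₁ = quantile μ (z₁ + 1/2))
    (hq2 : quantile μ z₂ = quantile μ (z₂ + 1/2)) :
    ∃ t : ℝ, 1/2 < μ {t} := by
  have hz1le : z₁ + 1/2 ≤ 1 := by linarith
  have hz2le : z₂ + 1/2 ≤ 1 := by linarith
  set a := quantile μ z₁ with ha
  set b := quantile μ z₂ with hb
  -- a ≤ b since the defining set for z₂ is smaller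
  have hab : a ≤ b := by
    apply le_csInf
    · obtain ⟨h1, h2⟩ := quantile_mem μ hsupp z₂ (by linarith)
      exact ⟨b, h1, h2⟩
    · intro t ht
      exact csInf_le ⟨0, fun s hs => hs.1.1⟩
        ⟨ht.1, le_trans (ENNReal.ofReal_le_ofReal h12.le) ht.2⟩
  -- μ [0,a] ≥ ofReal (z₁ + 1/2)
  have hma : ENNReal.ofReal (z₁ + 1/2) ≤ μ (Icc 0 a) := by
    have := (quantile_mem μ hsupp (z₁ + 1/2) hz1le).2
    rwa [← hq1] at this
  -- a = b
  have hab' : a = b := by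
    refine le_antisymm hab ?_
    refine csInf_le ⟨0, fun s hs => hs.1.1⟩ ?_
    refine ⟨(quantile_mem μ hsupp z₁ (by linarith)).1, ?_⟩
    exact le_trans (ENNReal.ofReal_le_ofReal (by linarith)) hma
  -- μ [0,a] ≥ ofReal (z₂ + 1/2)
  have hmb : ENNReal.ofReal (z₂ + 1/2) ≤ μ (Icc 0 a) := by
    have := (quantile_mem μ hsupp (z₂ + 1/2) hz2le).2
    rwa [← hq2, ← hab'] at this
  have hIco : μ (Ico 0 a) ≤ ENNReal.ofReal z₁ :=
    measure_Ico_quantile_le μ hsupp z₁ (by linarith)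
  have ha0 : 0 ≤ a := (quantile_mem μ hsupp z₁ (by linarith)).1.1
  have hsplit : μ (Icc 0 a) = μ (Ico 0 a) + μ {a} := by
    rw [← Ico_union_right ha0, measure_union (by simp) (measurableSet_singleton a)]
  refine ⟨a, ?_⟩
  by_contra hcon
  push_neg at hcon
  have h1 : ENNReal.ofReal z₂ + ENNReal.ofReal (1/2) ≤ ENNReal.ofReal z₁ + 1/2 := by
    calc ENNReal.ofReal z₂ + ENNReal.ofReal (1/2)
        = ENNReal.ofReal (z₂ + 1/2) := (ENNReal.ofReal_add (by linarith) (by norm_num)).symm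
      _ ≤ μ (Icc 0 a) := hmb
      _ = μ (Ico 0 a) + μ {a} := hsplit
      _ ≤ ENNReal.ofReal z₁ + 1/2 := add_le_add hIco hcon
  have hhalf : ENNReal.ofReal (1/2) = 1/2 := by
    rw [ENNReal.ofReal_div_of_pos (by norm_num)]; norm_num
  rw [hhalf] at h1
  have h2' : ENNReal.ofReal z₂ ≤ ENNReal.ofReal z₁ :=
    (ENNReal.add_le_add_iff_right (by norm_num)).mp h1
  rw [ENNReal.ofReal_le_ofReal_iff h0] at h2'
  linarith
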